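/- Let d = 1, F = {p_0, ..., p_n} ⊂ ℝ with p_0 = min F and p_n = max F, p_0 < p_n, and S_i(x) = λ_i x + (1−λ_i) p_i with λ_i ∈ (0,1). If λ_0 + λ_n ≥ 1, then the attractor of {S_i}_{i=0}^n equals the interval [p_0, p_n]. -/

import Mathlib

/-- in dimension 1, with `p 0 = min F`, `p n = max F`, `p 0 < p n`, contraction
ratios `λ_i ∈ (0,1)` and `λ_0 + λ_n ≥ 1`, the attractor of the IFS
`S_i(x) = λ_i x + (1-λ_i) p_i` equals the interval `[p 0, p n]`. -/
theorem attractor_eq_interval (n : ℕ) (hn : 1 ≤ n)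
    (p : Fin (n + 1) → ℝ)
    (hmin : ∀ i, p 0 ≤ p i) (hmax : ∀ i, p i ≤ p (Fin.last n)) (hlt : p 0 < p (Fin.last n))
    (lam : Fin (n + 1) → ℝ) (hlam : ∀ i, lam i ∈ Set.Ioo (0 : ℝ) 1)
    (hsum : 1 ≤ lam 0 + lam (Fin.last n))
    (X : Set ℝ) (hX : X.Nonempty) (hXc : IsCompact X)
    (hfix : X = ⋃ i, (fun x => lam i * x + (1 - lam i) * p i) '' X) :
    X = Set.Icc (p 0) (p (Fin.last n)) := by
  have hL : 0 < p (Fin.last n) - p 0 := by linarith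
  have hmem : ∀ i : Fin (n+1), ∀ x ∈ X, lam i * x + (1 - lam i) * p i ∈ X := by
    intro i x hx
    rw [hfix]
    exact Set.mem_iUnion.2 ⟨i, Set.mem_image_of_mem _ hx⟩
  have haX : sInf X ∈ X := hXc.sInf_mem hX
  have hbX : sSup X ∈ X := hXc.sSup_mem hX
  have hbdd := hXc.bddBelow
  have hbddA := hXc.bddAbove
  -- lower bound
  have hlowInf : p 0 ≤ sInf X := by
    have h : sInf X ∈ ⋃ i, (fun x => lam i * x + (1 - lam i) * p i) '' X := by
      rw [← hfix]; exact haX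
    obtain ⟨i, z, hz, hze⟩ := Set.mem_iUnion.1 h
    have hz1 : sInf X ≤ z := csInf_le hbdd hz
    have hze' : lam i * z + (1 - lam i) * p i = sInf X := hze
    have hl := hlam i
    have hpi := hmin i
    nlinarith [hl.1, hl.2, hze', mul_nonneg hl.1.le (sub_nonneg.2 hz1)]
  have hhighSup : sSup X ≤ p (Fin.last n) := by
    have h : sSup X ∈ ⋃ i, (fun x => lam i * x + (1 - lam i) * p i) '' X := by
      rw [← hfix]; exact hbX
    obtain ⟨i, z, hz, hze⟩ := Set.mem_iUnion.1 h
    have hz1 : z ≤ sSup X := le_csSup hbddA hz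
    have hze' : lam i * z + (1 - lam i) * p i = sSup X := hze
    have hl := hlam i
    have hpi := hmax i
    nlinarith [hl.1, hl.2, hze', mul_nonneg hl.1.le (sub_nonneg.2 hz1)]
  have hlow : ∀ x ∈ X, p 0 ≤ x := fun x hx => le_trans hlowInf (csInf_le hbdd hx)
  have hhigh : ∀ x ∈ X, x ≤ p (Fin.last n) := fun x hx => le_trans (le_csSup hbddA hx) hhighSup
  -- p 0 ∈ X
  have hp0 : p 0 ∈ X := by
    have h1 : lam 0 * sInf X + (1 - lam 0) * p 0 ∈ X := hmem 0 _ haX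
    have h2 := csInf_le hbdd h1
    have hl := hlam 0
    have : sInf X = p 0 := by nlinarith [hl.1, hl.2]
    rwa [← this]
  -- contraction factor
  set μ := max (lam 0) (lam (Fin.last n)) with hμdef
  have hμ0 : 0 < μ := lt_of_lt_of_le (hlam 0).1 (le_max_left _ _)
  have hμ1 : μ < 1 := max_lt (hlam 0).2 (hlam (Fin.last n)).2
  -- approximation lemma
  have key : ∀ k : ℕ, ∀ y ∈ Set.Icc (p 0) (p (Fin.last n)),
      ∃ x ∈ X, |y - x| ≤ μ ^ k * (p (Fin.last n) - p 0) := by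
    intro k
    induction k with
    | zero =>
      intro y hy
      refine ⟨p 0, hp0, ?_⟩
      rw [pow_zero, one_mul, abs_le]
      constructor <;> linarith [hy.1, hy.2]
    | succ k ih =>
      intro y hy
      by_cases hc : y ≤ p 0 + lam 0 * (p (Fin.last n) - p 0)
      · have hl := hlam 0
        set z := (y - (1 - lam 0) * p 0) / lam 0 with hzdef
        have hzy : lam 0 * z + (1 - lam 0) * p 0 = y := by
          rw [hzdef]; field_simp [hl.1.ne']; ring
        have hzI : z ∈ Set.Icc (p 0) (p (Fin.last n)) := by
          constructor
          · rw [hzdef, le_div_iff₀ hl.1]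
            nlinarith [hy.1]
          · rw [hzdef, div_le_iff₀ hl.1]
            nlinarith [hc, hL]
        obtain ⟨x, hx, hxle⟩ := ih z hzI
        refine ⟨lam 0 * x + (1 - lam 0) * p 0, hmem 0 x hx, ?_⟩
        have heq : y - (lam 0 * x + (1 - lam 0) * p 0) = lam 0 * (z - x) := by
          rw [← hzy]; ring
        rw [heq, abs_mul, abs_of_pos hl.1]
        calc lam 0 * |z - x| ≤ μ * (μ ^ k * (p (Fin.last n) - p 0)) :=
              mul_le_mul (le_max_left _ _) hxle (abs_nonneg _) (le_of_lt hμ0)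
          _ = μ ^ (k + 1) * (p (Fin.last n) - p 0) := by ring
      · have hl := hlam (Fin.last n)
        set z := (y - (1 - lam (Fin.last n)) * p (Fin.last n)) / lam (Fin.last n) with hzdef
        have hzy : lam (Fin.last n) * z + (1 - lam (Fin.last n)) * p (Fin.last n) = y := by
          rw [hzdef]; field_simp [hl.1.ne']; ring
        have hzI : z ∈ Set.Icc (p 0) (p (Fin.last n)) := by
          push_neg at hc
          constructor
          · rw [hzdef, le_div_iff₀ hl.1]
            nlinarith [hc, hL, hsum, (hlam 0).1]
          · rw [hzdef, div_le_iff₀ hl.1]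
            nlinarith [hy.2]
        obtain ⟨x, hx, hxle⟩ := ih z hzI
        refine ⟨lam (Fin.last n) * x + (1 - lam (Fin.last n)) * p (Fin.last n),
          hmem (Fin.last n) x hx, ?_⟩
        have heq : y - (lam (Fin.last n) * x + (1 - lam (Fin.last n)) * p (Fin.last n))
            = lam (Fin.last n) * (z - x) := by
          rw [← hzy]; ring
        rw [heq, abs_mul, abs_of_pos hl.1]
        calc lam (Fin.last n) * |z - x| ≤ μ * (μ ^ k * (p (Fin.last n) - p 0)) :=
              mul_le_mul (le_max_right _ _) hxle (abs_nonneg _) (le_of_lt hμ0)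
          _ = μ ^ (k + 1) * (p (Fin.last n) - p 0) := by ring
  apply Set.Subset.antisymm
  · intro x hx
    exact ⟨hlow x hx, hhigh x hx⟩
  · intro y hy
    have hcl : y ∈ closure X := by
      rw [Metric.mem_closure_iff]
      intro ε hε
      obtain ⟨k, hk⟩ := exists_pow_lt_of_lt_one (show (0:ℝ) < ε / (p (Fin.last n) - p 0) by positivity) hμ1
      obtain ⟨x, hx, hxd⟩ := key k y hy
      refine ⟨x, hx, ?_⟩
      rw [Real.dist_eq]
      have hlt2 : μ ^ k * (p (Fin.last n) - p 0) < ε := by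
        rw [lt_div_iff₀ hL] at hk
        exact hk
      exact lt_of_le_of_lt hxd hlt2
    rwa [hXc.isClosed.closure_eq] at hcl
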